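/- Let k be a field, D : (k^N)^d → k the multilinear form D(x_1,...,x_d) = Σ_{m=1}^{N} Π_{i=1}^d x_i(m). Then the variety Z_D = {(x_2,...,x_d) : D(·,x_2,...,x_d) ≡ 0} equals the union over functions σ : [N] → {2,...,d} of the linear subspaces {x_{σ(m)}(m) = 0 for all m ∈ [N]}; in particular Z_D has codimension exactly N in (k^N)^{d-1}. -/

import Mathlib

open scoped BigOperators

open MvPolynomial

noncomputable section

namespace DFSLaux

variable {k : Type*} [Field k]


variable {k : Type*} [Field k]

noncomputable def boxEquiv (n M : ℕ) : { s : Fin n →₀ ℕ | ∀ i, s i ≤ M } ≃ (Fin n → Fin (M+1)) where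
  toFun := fun s i => ⟨s.1 i, Nat.lt_succ_of_le (s.2 i)⟩
  invFun := fun g => ⟨Finsupp.equivFunOnFinite.symm (fun i => (g i : ℕ)),
    fun i => by simpa using Nat.lt_succ_iff.mp (g i).isLt⟩
  left_inv := fun s => by ext i; simp
  right_inv := fun g => by ext i; simp

theorem finrank_restrictDegree (n M : ℕ) :
    Module.finrank k (restrictDegree (Fin n) k M) = (M+1)^n := by
  classical
  haveI : Fintype { s : Fin n →₀ ℕ | ∀ i, s i ≤ M } := Fintype.ofEquiv _ (boxEquiv n M).symm
  have b : Module.Basis { s : Fin n →₀ ℕ | ∀ i, s i ≤ M } k (restrictDegree (Fin n) k M) :=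
    basisRestrictSupport k _
  rw [Module.finrank_eq_card_basis b, Fintype.card_congr (boxEquiv n M)]
  simp [Fintype.card_fun]

theorem exists_annihilator {n : ℕ} (f : Fin (n+1) → MvPolynomial (Fin n) k) :
    ∃ Q : MvPolynomial (Fin (n+1)) k, Q ≠ 0 ∧ aeval f Q = 0 := by
  classical
  by_contra hcon
  push_neg at hcon
  have hinj : Function.Injective (aeval f : MvPolynomial (Fin (n+1)) k →ₐ[k] MvPolynomial (Fin n) k) := by
    intro a b hab
    by_contra hne
    exact hcon (a - b) (sub_ne_zero.mpr hne) (by rw [map_sub, hab, sub_self])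
  have hli : LinearIndependent k
      (fun β : Fin (n+1) →₀ ℕ => aeval f (monomial β (1:k))) := by
    have := (basisMonomials (Fin (n+1)) k).linearIndependent.map'
      (aeval f : MvPolynomial (Fin (n+1)) k →ₐ[k] MvPolynomial (Fin n) k).toLinearMap
      (LinearMap.ker_eq_bot.mpr hinj)
    simpa [coe_basisMonomials, Function.comp_def] using this
  set d : ℕ := Finset.univ.sup (fun i => (f i).totalDegree) with hd
  set A : ℕ := (n+1)*d + 1 with hA
  set t : ℕ := A^n with ht
  set M : ℕ := (n+1)*(t*d) with hM
  have hdeg : ∀ b : Fin (n+1) → Fin (t+1),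
      (aeval f (monomial (Finsupp.equivFunOnFinite.symm (fun i => ((b i : ℕ)))) (1:k))).totalDegree ≤ M := by
    intro b
    rw [aeval_monomial, map_one, one_mul, Finsupp.prod_pow]
    refine le_trans (totalDegree_finset_prod _ _) ?_
    refine le_trans (Finset.sum_le_sum (fun i _ => totalDegree_pow (f i) _)) ?_
    rw [hM]
    have key : ∀ i : Fin (n+1), (Finsupp.equivFunOnFinite.symm (fun i => ((b i : ℕ)))) i * (f i).totalDegree ≤ t*d := by
      intro i
      have h1 : (Finsupp.equivFunOnFinite.symm (fun i => ((b i : ℕ)))) i ≤ t := by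
        simpa using Nat.lt_succ_iff.mp (b i).isLt
      exact Nat.mul_le_mul h1 (Finset.le_sup (f := fun i => (f i).totalDegree) (Finset.mem_univ i))
    calc ∑ i, (Finsupp.equivFunOnFinite.symm (fun i => ((b i : ℕ)))) i * (f i).totalDegree
        ≤ ∑ _i : Fin (n+1), t*d := Finset.sum_le_sum (fun i _ => key i)
      _ = (n+1)*(t*d) := by simp [Finset.sum_const]
  set v : (Fin (n+1) → Fin (t+1)) → restrictDegree (Fin n) k M :=
    fun b => ⟨aeval f (monomial (Finsupp.equivFunOnFinite.symm (fun i => ((b i : ℕ)))) (1:k)),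
      restrictTotalDegree_le_restrictDegree (Fin n) k M
        ((mem_restrictTotalDegree _ _ _).mpr (hdeg b))⟩ with hv
  have hvli : LinearIndependent k v := by
    have hcomp : LinearIndependent k (fun b : Fin (n+1) → Fin (t+1) =>
        aeval f (monomial (Finsupp.equivFunOnFinite.symm (fun i => ((b i : ℕ)))) (1:k))) := by
      apply hli.comp
      intro b b' hbb
      have h2 := Finsupp.equivFunOnFinite.symm.injective hbb
      funext i
      exact Fin.ext (congrFun h2 i)
    exact (LinearIndependent.of_comp (Submodule.subtype _) hcomp)
  have hcard := hvli.fintype_card_le_finrank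
  rw [finrank_restrictDegree, Fintype.card_fun, Fintype.card_fin, Fintype.card_fin] at hcard
  -- hcard : (t+1)^(n+1) ≤ (M+1)^n
  have h1 : M + 1 ≤ A * (t+1) := by
    rw [hM, hA]
    nlinarith [Nat.zero_le t, Nat.zero_le d]
  have h2 : (M+1)^n ≤ (A*(t+1))^n := Nat.pow_le_pow_left h1 n
  have h3 : (A*(t+1))^n = A^n * (t+1)^n := mul_pow _ _ _
  have h4 : (t+1)^(n+1) = (t+1)^n * (t+1) := pow_succ _ _
  have h5 : (0:ℕ) < (t+1)^n := pow_pos (Nat.succ_pos t) _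
  have h6 : A^n ≤ t := le_of_eq ht.symm
  have h7 : (t+1)^(n+1) < (t+1)^(n+1) := by
    calc (t+1)^(n+1) ≤ (M+1)^n := hcard
      _ ≤ A^n*(t+1)^n := h2.trans (le_of_eq h3)
      _ ≤ t*(t+1)^n := Nat.mul_le_mul_right _ h6
      _ < (t+1)*(t+1)^n := Nat.mul_lt_mul_of_lt_of_le (Nat.lt_succ_self t) le_rfl h5
      _ = (t+1)^(n+1) := by rw [pow_succ]; ring
  exact lt_irrefl _ h7




theorem no_long_chain {n : ℕ} {A : Type*} [CommRing A] [Algebra k A]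
    (hA : ∀ f : Fin (n+1) → A, ∃ Q : MvPolynomial (Fin (n+1)) k, Q ≠ 0 ∧ aeval f Q = 0)
    (p : Fin (n+2) → Ideal A) (hp : ∀ i, (p i).IsPrime) (hmono : StrictMono p) : False := by
  classical
  choose f hf1 hf2 using fun i : Fin (n+1) =>
    SetLike.exists_of_lt (hmono (Fin.castSucc_lt_succ (i := i)))
  obtain ⟨Q, hQ0, hQa⟩ := hA f
  have hsupp : (Q.support.image (toLex : (Fin (n+1) →₀ ℕ) → Lex (Fin (n+1) →₀ ℕ))).Nonempty :=
    (Finset.image_nonempty).mpr (support_nonempty.mpr hQ0)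
  set αl := (Q.support.image toLex).min' hsupp with hαl
  set α : Fin (n+1) →₀ ℕ := ofLex αl with hα
  have hαmem : α ∈ Q.support := by
    obtain ⟨β, hβ, hβe⟩ := Finset.mem_image.mp ((Q.support.image toLex).min'_mem hsupp)
    rw [← hαl] at hβe
    have : α = β := by rw [hα, ← hβe]; rfl
    rwa [this]
  have hmin : ∀ β ∈ Q.support, αl ≤ toLex β := fun β hβ =>
    Finset.min'_le _ _ (Finset.mem_image_of_mem _ hβ)
  set S : ℕ → A := fun j =>
    ∑ β ∈ Q.support.filter (fun β => ∀ i : Fin (n+1), (i : ℕ) < j → β i = α i),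
      algebraMap k A (Q.coeff β) *
        ∏ i ∈ Finset.univ.filter (fun i : Fin (n+1) => j ≤ (i : ℕ)), f i ^ β i with hS
  have main : ∀ j, ∀ hj : j ≤ n+1, S j ∈ p ⟨j, Nat.lt_succ_of_le hj⟩ := by
    intro j
    induction j with
    | zero =>
      intro _
      have e1 : Q.support.filter (fun β => ∀ i : Fin (n+1), (i:ℕ) < 0 → β i = α i)
          = Q.support :=
        Finset.filter_true_of_mem (fun β _ => fun i hi => absurd hi (by omega))
      have e2 : Finset.univ.filter (fun i : Fin (n+1) => 0 ≤ (i:ℕ)) = Finset.univ :=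
        Finset.filter_true_of_mem (fun i _ => Nat.zero_le _)
      have h0 : S 0 = aeval f Q := by
        simp only [hS]
        rw [e1, e2, aeval_def, eval₂_eq]
        refine Finset.sum_congr rfl (fun β hβ => ?_)
        congr 1
        exact (Finset.prod_subset (Finset.subset_univ _)
          (fun i _ hi => by rw [Finsupp.notMem_support_iff.mp hi, pow_zero])).symm
      rw [h0, hQa]
      exact Submodule.zero_mem _
    | succ j ih =>
      intro hj
      have hSj := ih (by omega)
      set jι : Fin (n+1) := ⟨j, by omega⟩ with hjι
      set F := Q.support.filter (fun β => ∀ i : Fin (n+1), (i : ℕ) < j → β i = α i) with hF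
      set P : (Fin (n+1) →₀ ℕ) → A :=
        fun β => ∏ i ∈ Finset.univ.filter (fun i : Fin (n+1) => j+1 ≤ (i:ℕ)), f i ^ β i with hP
      have hge : ∀ β ∈ F, α jι ≤ β jι := by
        intro β hβ
        rw [hF, Finset.mem_filter] at hβ
        by_contra hlt
        push_neg at hlt
        have : toLex β < αl := ⟨jι, fun d hd => (hβ.2 d hd), hlt⟩
        exact absurd (hmin β hβ.1) (not_le.mpr this)
      have hsplit_set : Finset.univ.filter (fun i : Fin (n+1) => j ≤ (i:ℕ))
          = insert jι (Finset.univ.filter (fun i : Fin (n+1) => j+1 ≤ (i:ℕ))) := by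
        ext i
        simp only [Finset.mem_filter, Finset.mem_univ, true_and, Finset.mem_insert]
        have hjval : (jι : ℕ) = j := rfl
        rw [Fin.ext_iff, hjval]
        omega
      have hnotmem : jι ∉ Finset.univ.filter (fun i : Fin (n+1) => j+1 ≤ (i:ℕ)) := by
        simp [hjι]
      set U : A := ∑ β ∈ F,
        algebraMap k A (Q.coeff β) * (f jι ^ (β jι - α jι) * P β) with hU
      have hSU : S j = f jι ^ α jι * U := by
        simp only [hS, hU, Finset.mul_sum, ← hF]
        refine Finset.sum_congr rfl (fun β hβ => ?_)
        have hpow : f jι ^ β jι = f jι ^ α jι * f jι ^ (β jι - α jι) := by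
          rw [← pow_add]
          congr 1
          have := hge β hβ
          omega
        rw [hsplit_set, Finset.prod_insert hnotmem, hpow, hP]
        ring
      have hUj : U ∈ p ⟨j, by omega⟩ := by
        rw [hSU] at hSj
        rcases (hp _).mem_or_mem hSj with h | h
        · have hfj : f jι ∈ p ⟨j, by omega⟩ := (hp _).mem_of_pow_mem _ h
          have : p (Fin.castSucc jι) = p ⟨j, by omega⟩ := rfl
          exact absurd (this ▸ hfj) (hf2 jι)
        · exact h
      have hUj1 : U ∈ p ⟨j+1, by omega⟩ :=
        hmono.monotone (by simp [Fin.mk_le_mk]) hUj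
      -- split U
      set W : A := ∑ β ∈ F.filter (fun β => ¬ β jι = α jι),
        algebraMap k A (Q.coeff β) * (f jι ^ (β jι - α jι - 1) * P β) with hW
      have hF1 : F.filter (fun β => β jι = α jι)
          = Q.support.filter (fun β => ∀ i : Fin (n+1), (i : ℕ) < j+1 → β i = α i) := by
        rw [hF, Finset.filter_filter]
        apply Finset.filter_congr
        intro β _
        constructor
        · rintro ⟨h1, h2⟩ i hi
          rcases Nat.lt_or_ge (i:ℕ) j with h | h
          · exact h1 i h
          · have hjval : (jι : ℕ) = j := rfl
            have : i = jι := by rw [Fin.ext_iff, hjval]; omega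
            rw [this]; exact h2
        · intro h
          exact ⟨fun i hi => h i (by omega), h jι (by simp [hjι])⟩
      have hUsplit : U = S (j+1) + f jι * W := by
        rw [hU, ← Finset.sum_filter_add_sum_filter_not F (fun β => β jι = α jι)]
        congr 1
        · simp only [hS, ← hF1]
          refine Finset.sum_congr rfl (fun β hβ => ?_)
          rw [Finset.mem_filter] at hβ
          rw [hβ.2, Nat.sub_self, pow_zero, one_mul]
        · rw [hW, Finset.mul_sum]
          refine Finset.sum_congr rfl (fun β hβ => ?_)
          rw [Finset.mem_filter] at hβ
          have h1 : α jι ≤ β jι := hge β hβ.1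
          have h2 : β jι ≠ α jι := hβ.2
          have hpow : f jι ^ (β jι - α jι) = f jι * f jι ^ (β jι - α jι - 1) := by
            conv_lhs => rw [show β jι - α jι = 1 + (β jι - α jι - 1) by omega]
            rw [pow_add, pow_one]
          rw [hpow]
          ring
      have : S (j+1) = U - f jι * W := by rw [hUsplit]; ring
      rw [this]
      refine Submodule.sub_mem _ hUj1 (Ideal.mul_mem_right _ _ ?_)
      have : p jι.succ = p ⟨j+1, by omega⟩ := rfl
      exact this ▸ hf1 jι
  have hfin := main (n+1) le_rfl
  have hfilt : Q.support.filter (fun β => ∀ i : Fin (n+1), (i : ℕ) < n+1 → β i = α i) = {α} := by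
    ext β
    simp only [Finset.mem_filter, Finset.mem_singleton]
    constructor
    · rintro ⟨hβ, h⟩
      ext i
      exact h i i.isLt
    · rintro rfl
      exact ⟨hαmem, fun i _ => rfl⟩
  have hempty : Finset.univ.filter (fun i : Fin (n+1) => n+1 ≤ (i : ℕ)) = ∅ := by
    ext i
    simp only [Finset.mem_filter, Finset.mem_univ, true_and, Finset.notMem_empty, iff_false, not_le]
    omega
  have hSend : S (n+1) = algebraMap k A (Q.coeff α) := by
    simp only [hS]
    rw [hfilt, hempty, Finset.sum_singleton, Finset.prod_empty, mul_one]
  have hunit : IsUnit (algebraMap k A (Q.coeff α)) :=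
    (Ne.isUnit (mem_support_iff.mp hαmem)).map (algebraMap k A)
  rw [hSend] at hfin
  exact (hp _).ne_top (Ideal.eq_top_of_isUnit_mem _ hfin hunit)



/-- `AD k n A`: any `n+1` elements of `A` are algebraically dependent over `k`. -/
def AD (k : Type*) [Field k] (n : ℕ) (A : Type*) [CommRing A] [Algebra k A] : Prop :=
  ∀ f : Fin (n+1) → A, ∃ Q : MvPolynomial (Fin (n+1)) k, Q ≠ 0 ∧ aeval f Q = 0

theorem AD_of_surjective {n : ℕ} {A B : Type*} [CommRing A] [CommRing B]
    [Algebra k A] [Algebra k B] (φ : A →ₐ[k] B) (hφ : Function.Surjective φ)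
    (h : AD k n A) : AD k n B := by
  intro f
  choose g hg using fun i => hφ (f i)
  obtain ⟨Q, h0, hQ⟩ := h g
  refine ⟨Q, h0, ?_⟩
  have hcomp : (aeval f : MvPolynomial (Fin (n+1)) k →ₐ[k] B) = φ.comp (aeval g) := by
    rw [comp_aeval]
    congr 1
    funext i
    rw [hg]
  rw [hcomp]
  simp [hQ]

theorem AD_mvPolynomial {n : ℕ} : AD k n (MvPolynomial (Fin n) k) := fun f => exists_annihilator f

theorem AD_mvPolynomial_card {W : Type*} [Fintype W] {n : ℕ} (h : Fintype.card W = n) :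
    AD k n (MvPolynomial W k) := by
  have g : Fin n ≃ W := (Fintype.equivFinOfCardEq h).symm
  exact AD_of_surjective (renameEquiv k g).toAlgHom (renameEquiv k g).surjective AD_mvPolynomial

theorem no_long_chain' {n : ℕ} {A : Type*} [CommRing A] [Algebra k A]
    (hA : AD k n A)
    (p : Fin (n+2) → Ideal A) (hp : ∀ i, (p i).IsPrime) (hmono : StrictMono p) : False :=
  no_long_chain hA p hp hmono

theorem chain_length_le {n L : ℕ} {A : Type*} [CommRing A] [Algebra k A] (hA : AD k n A)
    (r : Fin (L+1) → Ideal A) (hr : ∀ i, (r i).IsPrime) (hmono : StrictMono r) : L ≤ n := by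
  by_contra hcon
  push_neg at hcon
  refine no_long_chain' hA (fun i : Fin (n+2) => r (Fin.castLE (by omega) i))
    (fun i => hr _) (fun i j hij => hmono ?_)
  rw [Fin.lt_def] at hij ⊢
  simpa using hij



/-- complement variables -/
abbrev Wt (e N : ℕ) (σ : Fin N → Fin e) : Type := {q : Fin e × Fin N // q.1 ≠ σ q.2}

noncomputable def ψ (σ : Fin N → Fin e) :
    MvPolynomial (Fin e × Fin N) k →ₐ[k] MvPolynomial (Wt e N σ) k :=
  aeval (fun q => if h : q.1 = σ q.2 then 0 else X ⟨q, h⟩)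

theorem ψ_surjective (σ : Fin N → Fin e) : Function.Surjective (ψ (k := k) σ) := by
  intro p
  refine ⟨aeval (fun w : Wt e N σ => X w.1) p, ?_⟩
  have hcomp : (ψ (k := k) σ).comp (aeval (fun w : Wt e N σ => X w.1)) =
      AlgHom.id k (MvPolynomial (Wt e N σ) k) := by
    apply algHom_ext
    intro w
    simp only [AlgHom.comp_apply, aeval_X, ψ, AlgHom.coe_id, id_eq]
    rw [dif_neg w.2]
  exact AlgHom.congr_fun hcomp p

theorem card_Wt (σ : Fin N → Fin e) : Fintype.card (Wt e N σ) = e * N - N := by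
  classical
  have hc : Fintype.card {q : Fin e × Fin N // q.1 = σ q.2} = N := by
    have eqv : {q : Fin e × Fin N // q.1 = σ q.2} ≃ Fin N :=
      { toFun := fun q => q.1.2
        invFun := fun m => ⟨(σ m, m), rfl⟩
        left_inv := fun q => by
          obtain ⟨⟨a, b⟩, h⟩ := q
          simp only at h
          exact Subtype.ext (Prod.ext h.symm rfl)
        right_inv := fun m => rfl }
    rw [Fintype.card_congr eqv, Fintype.card_fin]
  have := Fintype.card_subtype_compl (fun q : Fin e × Fin N => q.1 = σ q.2)
  rw [hc, Fintype.card_prod, Fintype.card_fin, Fintype.card_fin] at this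
  exact this

def Vc (σ : Fin N → Fin e) : Set (Fin e × Fin N → k) := {x | ∀ m, x (σ m, m) = 0}

theorem vanishingIdeal_Vc [Infinite k] (σ : Fin N → Fin e) :
    vanishingIdeal k (Vc (k := k) σ) = RingHom.ker (ψ (k := k) σ) := by
  classical
  ext p
  rw [mem_vanishingIdeal_iff, RingHom.mem_ker]
  constructor
  · intro hvan
    have key : ∀ z : Wt e N σ → k, eval z (ψ (k := k) σ p) = 0 := by
      intro z
      set x : Fin e × Fin N → k := fun q => if h : q.1 = σ q.2 then 0 else z ⟨q, h⟩ with hx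
      have hxV : x ∈ Vc (k := k) σ := fun m => by simp [hx]
      have hcomp : ((aeval z : MvPolynomial (Wt e N σ) k →ₐ[k] k).comp (ψ (k := k) σ)) =
          aeval x := by
        apply algHom_ext
        intro q
        simp only [AlgHom.comp_apply, aeval_X, ψ]
        by_cases h : q.1 = σ q.2
        · rw [dif_pos h, map_zero, hx]
          simp [dif_pos h]
        · rw [dif_neg h, aeval_X, hx]
          simp [dif_neg h]
      have h2 := AlgHom.congr_fun hcomp p
      rw [AlgHom.comp_apply] at h2
      have h3 : aeval z (ψ (k := k) σ p) = eval z (ψ (k := k) σ p) := by simp [aeval_def]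
      have h4 : aeval x p = eval x p := by simp [aeval_def]
      rw [← h3, h2, h4]
      exact hvan x hxV
    have := MvPolynomial.funext (p := ψ (k := k) σ p) (q := 0)
      (fun z => by rw [key z, map_zero])
    exact this
  · intro hker x hx
    have hcomp : ((aeval (fun w : Wt e N σ => x w.1) : MvPolynomial (Wt e N σ) k →ₐ[k] k).comp
        (ψ (k := k) σ)) = aeval x := by
      apply algHom_ext
      intro q
      simp only [AlgHom.comp_apply, aeval_X, ψ]
      by_cases h : q.1 = σ q.2
      · rw [dif_pos h, map_zero]
        have hq : q = (σ q.2, q.2) := Prod.ext h rfl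
        rw [hq]
        exact (hx q.2).symm
      · rw [dif_neg h, aeval_X]
    have h2 := AlgHom.congr_fun hcomp p
    rw [AlgHom.comp_apply] at h2
    have h4 : aeval x p = eval x p := by simp [aeval_def]
    rw [← h2, hker, map_zero]

theorem setEq_uncurried (he : 1 ≤ e) :
    {x : Fin e × Fin N → k | ∀ y : Fin N → k, (∑ m, y m * ∏ i, x (i, m)) = 0}
      = ⋃ σ : Fin N → Fin e, Vc (k := k) σ := by
  classical
  ext x
  simp only [Set.mem_setOf_eq, Set.mem_iUnion, Vc]
  constructor
  · intro h
    have hm : ∀ m : Fin N, ∃ i : Fin e, x (i, m) = 0 := by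
      intro m
      have h0 := h (Pi.single m 1)
      have hsum : ∑ m', (Pi.single m (1:k) : Fin N → k) m' * ∏ i, x (i, m') = ∏ i, x (i, m) := by
        rw [Finset.sum_eq_single m]
        · rw [Pi.single_eq_same, one_mul]
        · intro b _ hb
          rw [Pi.single_eq_of_ne hb, zero_mul]
        · intro hm'; exact absurd (Finset.mem_univ m) hm'
      rw [hsum] at h0
      obtain ⟨i, _, hi⟩ := Finset.prod_eq_zero_iff.mp h0
      exact ⟨i, hi⟩
    choose σ hσ using hm
    exact ⟨σ, fun m => hσ m⟩
  · rintro ⟨σ, hσ⟩ y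
    refine Finset.sum_eq_zero (fun m _ => ?_)
    rw [Finset.prod_eq_zero (Finset.mem_univ (σ m)) (hσ m), mul_zero]

theorem setEq_curried (he : 1 ≤ e) :
    {x : Fin e → Fin N → k | ∀ y : Fin N → k, (∑ m, y m * ∏ i, x i m) = 0}
      = ⋃ σ : Fin N → Fin e, {x : Fin e → Fin N → k | ∀ m, x (σ m) m = 0} := by
  classical
  ext x
  simp only [Set.mem_setOf_eq, Set.mem_iUnion]
  constructor
  · intro h
    have hm : ∀ m : Fin N, ∃ i : Fin e, x i m = 0 := by
      intro m
      have h0 := h (Pi.single m 1)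
      have hsum : ∑ m', (Pi.single m (1:k) : Fin N → k) m' * ∏ i, x i m' = ∏ i, x i m := by
        rw [Finset.sum_eq_single m]
        · rw [Pi.single_eq_same, one_mul]
        · intro b _ hb
          rw [Pi.single_eq_of_ne hb, zero_mul]
        · intro hm'; exact absurd (Finset.mem_univ m) hm'
      rw [hsum] at h0
      obtain ⟨i, _, hi⟩ := Finset.prod_eq_zero_iff.mp h0
      exact ⟨i, hi⟩
    choose σ hσ using hm
    exact ⟨σ, fun m => hσ m⟩
  · rintro ⟨σ, hσ⟩ y
    refine Finset.sum_eq_zero (fun m _ => ?_)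
    rw [Finset.prod_eq_zero (Finset.mem_univ (σ m)) (hσ m), mul_zero]

theorem vanishingIdeal_iUnion {σT : Type*} (V : σT → Set ((Fin e × Fin N) → k)) :
    vanishingIdeal k (⋃ s, V s) = ⨅ s, vanishingIdeal k (V s) := by
  ext p
  rw [mem_vanishingIdeal_iff, Submodule.mem_iInf]
  constructor
  · intro h s
    rw [mem_vanishingIdeal_iff]
    exact fun x hx => h x (Set.mem_iUnion.mpr ⟨s, hx⟩)
  · intro h x hx
    obtain ⟨s, hs⟩ := Set.mem_iUnion.mp hx
    exact (mem_vanishingIdeal_iff.mp (h s)) x hs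


theorem lower_chain {W : Type*} [Fintype W] {n : ℕ} (g : Fin n ≃ W) :
    ∃ P : Fin (n+1) → Ideal (MvPolynomial W k), (∀ j, (P j).IsPrime) ∧ StrictMono P := by
  classical
  set u : ℕ → W → MvPolynomial W k :=
    fun j w => if ((g.symm w : Fin n) : ℕ) < j then 0 else X w with hu
  set P : Fin (n+1) → Ideal (MvPolynomial W k) :=
    fun j => RingHom.ker (aeval (u (j:ℕ)) : MvPolynomial W k →ₐ[k] MvPolynomial W k) with hP
  have hmono : ∀ {a b : ℕ}, a ≤ b →
      RingHom.ker (aeval (u a) : MvPolynomial W k →ₐ[k] MvPolynomial W k)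
        ≤ RingHom.ker (aeval (u b) : MvPolynomial W k →ₐ[k] MvPolynomial W k) := by
    intro a b hab x hx
    rw [RingHom.mem_ker] at hx ⊢
    have hfac : (aeval (u b) : MvPolynomial W k →ₐ[k] MvPolynomial W k)
        = (aeval (u b)).comp (aeval (u a)) := by
      apply algHom_ext
      intro w
      simp only [AlgHom.comp_apply, aeval_X, hu]
      by_cases h : ((g.symm w : Fin n) : ℕ) < a
      · rw [if_pos h, map_zero, if_pos (lt_of_lt_of_le h hab)]
      · rw [if_neg h, aeval_X]
    rw [hfac, AlgHom.comp_apply, hx, map_zero]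
  refine ⟨P, fun j => RingHom.ker_isPrime _, fun i j hij => ?_⟩
  have hij' : (i:ℕ) < (j:ℕ) := hij
  refine lt_of_le_of_ne (hmono (le_of_lt hij')) (fun hEq => ?_)
  have hin : (i : ℕ) < n := by
    have := j.isLt
    omega
  have h1 : X (g ⟨(i:ℕ), hin⟩) ∈
      RingHom.ker (aeval (u (j:ℕ)) : MvPolynomial W k →ₐ[k] MvPolynomial W k) := by
    rw [RingHom.mem_ker, aeval_X, hu]
    simp only [Equiv.symm_apply_apply]
    rw [if_pos hij']
  have h2 : X (g ⟨(i:ℕ), hin⟩) ∉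
      RingHom.ker (aeval (u (i:ℕ)) : MvPolynomial W k →ₐ[k] MvPolynomial W k) := by
    rw [RingHom.mem_ker, aeval_X, hu]
    simp only [Equiv.symm_apply_apply]
    rw [if_neg (lt_irrefl _)]
    exact X_ne_zero _
  have h1' : X (g ⟨(i:ℕ), hin⟩) ∈ P j := h1
  have h2' : X (g ⟨(i:ℕ), hin⟩) ∉ P i := h2
  rw [← hEq] at h1'
  exact h2' h1'

end DFSLaux

open DFSLaux in
/-- for the diagonal multilinear form `D(x_1,...,x_d) = Σ_m Π_i x_i(m)` on
`(k^N)^d`, the locus `Z_D` of tuples of the last `d-1` variables (indexed here by `Fin e`,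
`e = d-1 ≥ 1`) on which `D(·, x) ≡ 0` is the union over `σ : [N] → [e]` of the coordinate
subspaces `{x : x_{σ(m)}(m) = 0 ∀ m}`, and it has codimension exactly `N` in `(k^N)^e`,
i.e. its Zariski closure has dimension `e·N - N`.  (`k` is assumed infinite so that the
Zariski closure of the set of `k`-points has the expected dimension.) -/
theorem diagonal_form_singular_locus (k : Type*) [Field k] [Infinite k] (N e : ℕ)
    (he : 1 ≤ e) :
    ({x : Fin e → Fin N → k | ∀ y : Fin N → k, (∑ m, y m * ∏ i, x i m) = 0}
        = ⋃ σ : Fin N → Fin e, {x | ∀ m, x (σ m) m = 0}) ∧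
    ringKrullDim (MvPolynomial (Fin e × Fin N) k ⧸
        MvPolynomial.vanishingIdeal k
          {x : Fin e × Fin N → k | ∀ y : Fin N → k, (∑ m, y m * ∏ i, x (i, m)) = 0})
      = ((e * N - N : ℕ) : WithBot ℕ∞) := by
  classical
  refine ⟨setEq_curried he, ?_⟩
  rw [setEq_uncurried he, vanishingIdeal_iUnion,
    show (⨅ σ : Fin N → Fin e, MvPolynomial.vanishingIdeal k (Vc (k := k) σ))
      = ⨅ σ : Fin N → Fin e, RingHom.ker (ψ (k := k) σ) from
        iInf_congr (fun σ => vanishingIdeal_Vc σ)]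
  set R := MvPolynomial (Fin e × Fin N) k with hR
  set I : Ideal R := ⨅ σ : Fin N → Fin e, RingHom.ker (ψ (k := k) σ) with hI
  set n' : ℕ := e * N - N with hn'
  have hIker : ∀ σ : Fin N → Fin e, I ≤ RingHom.ker (ψ (k := k) σ) := fun σ => iInf_le _ σ
  apply le_antisymm
  · -- upper bound
    show Order.krullDim (PrimeSpectrum (R ⧸ I)) ≤ _
    refine iSup_le fun ℓ => ?_
    have key : ℓ.length ≤ n' := by
      set q : Fin (ℓ.length + 1) → Ideal R :=
        fun i => Ideal.comap (Ideal.Quotient.mk I) (ℓ.toFun i).asIdeal with hq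
      have hqp : ∀ i, (q i).IsPrime := fun i => by
        haveI := (ℓ.toFun i).isPrime
        exact Ideal.comap_isPrime _ _
      have hqmono : StrictMono q := by
        intro i j hij
        have h1 := (PrimeSpectrum.asIdeal_lt_asIdeal _ _).mpr (ℓ.strictMono hij)
        refine lt_of_le_of_ne (Ideal.comap_mono h1.le) (fun hEq => h1.ne ?_)
        exact Ideal.comap_injective_of_surjective (Ideal.Quotient.mk I)
          Ideal.Quotient.mk_surjective hEq
      have hI0 : I ≤ q 0 := by
        have h2 : RingHom.ker (Ideal.Quotient.mk I) ≤ q 0 := by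
          rw [RingHom.ker_eq_comap_bot]
          exact Ideal.comap_mono bot_le
        exact le_trans (le_of_eq Ideal.mk_ker.symm) h2
      have hinf : Finset.univ.inf (fun σ : Fin N → Fin e => RingHom.ker (ψ (k := k) σ)) ≤ q 0 := by
        refine le_trans (le_of_eq ?_) hI0
        rw [Finset.inf_eq_iInf]
        simp [hI]
      obtain ⟨σ, -, hσ⟩ := ((hqp 0).inf_le').mp hinf
      have hKq : ∀ i, RingHom.ker (ψ (k := k) σ) ≤ q i :=
        fun i => le_trans hσ (hqmono.monotone (Fin.zero_le i))
      set r : Fin (ℓ.length + 1) → Ideal (MvPolynomial (Wt e N σ) k) :=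
        fun i => Ideal.map (ψ (k := k) σ) (q i) with hr
      have hrp : ∀ i, (r i).IsPrime := fun i => by
        haveI := hqp i
        exact Ideal.map_isPrime_of_surjective (ψ_surjective σ) (hKq i)
      have hrmono : StrictMono r := by
        intro i j hij
        refine lt_of_le_of_ne (Ideal.map_mono (hqmono hij).le) (fun hEq => (hqmono hij).ne ?_)
        have hEq' : Ideal.map (ψ (k := k) σ) (q i) = Ideal.map (ψ (k := k) σ) (q j) := hEq
        have h2 := congrArg (Ideal.comap (ψ (k := k) σ)) hEq'
        rw [Ideal.comap_map_of_surjective (ψ (k := k) σ) (ψ_surjective σ),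
          Ideal.comap_map_of_surjective (ψ (k := k) σ) (ψ_surjective σ),
          ← RingHom.ker_eq_comap_bot (ψ (k := k) σ), sup_eq_left.mpr (hKq i),
          sup_eq_left.mpr (hKq j)] at h2
        exact h2
      exact chain_length_le (AD_mvPolynomial_card (card_Wt σ)) r hrp hrmono
    exact_mod_cast key
  · -- lower bound
    set σ0 : Fin N → Fin e := fun _ => ⟨0, he⟩ with hσ0
    obtain ⟨P, hPp, hPmono⟩ :=
      lower_chain (k := k) (W := Wt e N σ0) (Fintype.equivFinOfCardEq (card_Wt σ0)).symm
    set q' : Fin (n' + 1) → Ideal R :=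
      fun j => Ideal.comap (ψ (k := k) σ0) (P j) with hq'
    have hq'p : ∀ j, (q' j).IsPrime := fun j => by
      haveI := hPp j
      exact Ideal.comap_isPrime _ _
    have hq'mono : StrictMono q' := by
      intro i j hij
      refine lt_of_le_of_ne (Ideal.comap_mono (hPmono hij).le) (fun hEq => (hPmono hij).ne ?_)
      have hEq' : Ideal.comap (ψ (k := k) σ0) (P i) = Ideal.comap (ψ (k := k) σ0) (P j) := hEq
      have h2 := congrArg (Ideal.map (ψ (k := k) σ0)) hEq'
      rwa [Ideal.map_comap_of_surjective (ψ (k := k) σ0) (ψ_surjective σ0),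
        Ideal.map_comap_of_surjective (ψ (k := k) σ0) (ψ_surjective σ0)] at h2
    have hIq' : ∀ j, I ≤ q' j := fun j => by
      refine le_trans (hIker σ0) ?_
      rw [RingHom.ker_eq_comap_bot]
      exact Ideal.comap_mono bot_le
    set r' : Fin (n' + 1) → Ideal (R ⧸ I) :=
      fun j => Ideal.map (Ideal.Quotient.mk I) (q' j) with hr'
    have hr'p : ∀ j, (r' j).IsPrime := fun j => by
      haveI := hq'p j
      refine Ideal.map_isPrime_of_surjective Ideal.Quotient.mk_surjective ?_
      rw [Ideal.mk_ker]
      exact hIq' j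
    have hr'mono : StrictMono r' := by
      intro i j hij
      refine lt_of_le_of_ne (Ideal.map_mono (hq'mono hij).le) (fun hEq => (hq'mono hij).ne ?_)
      have hEq' : Ideal.map (Ideal.Quotient.mk I) (q' i) = Ideal.map (Ideal.Quotient.mk I) (q' j) := hEq
      have h2 := congrArg (Ideal.comap (Ideal.Quotient.mk I)) hEq'
      rw [Ideal.comap_map_of_surjective (Ideal.Quotient.mk I) Ideal.Quotient.mk_surjective,
        Ideal.comap_map_of_surjective (Ideal.Quotient.mk I) Ideal.Quotient.mk_surjective,
        ← RingHom.ker_eq_comap_bot (Ideal.Quotient.mk I), Ideal.mk_ker,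
        sup_eq_left.mpr (hIq' i), sup_eq_left.mpr (hIq' j)] at h2
      exact h2
    set ℓ₀ : LTSeries (PrimeSpectrum (R ⧸ I)) :=
      ⟨n', fun j => ⟨r' j, hr'p j⟩, fun j => by
        exact (PrimeSpectrum.asIdeal_lt_asIdeal _ _).mp
          (hr'mono (Fin.castSucc_lt_succ (i := j)))⟩ with hℓ₀
    have hlen := Order.LTSeries.length_le_krullDim ℓ₀
    exact_mod_cast hlen

end
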